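/- Let H ≥ 0 be self-adjoint on L²(X,m) with quadratic form h, and suppose the semigroup e^{−tH} is ultracontractive, i.e., e^{−tH} maps L¹ boundedly into L² for each t > 0 with norm c(t). Then the super Poincaré inequality holds: for every r > 0 there is β(r) < ∞ such that ‖f‖₂² ≤ r·h[f] + β(r)·‖f‖₁² for all f ∈ Q(H) ∩ L¹. -/

import Mathlib

open MeasureTheory Set Filter Topology

noncomputable section

/-- The bounded Borel functional calculus of a self-adjoint operator on a complex
Hilbert space `ℋ`, encoded axiomatically: a star-algebra homomorphism from bounded
Borel functions on `ℝ` (only their values on the spectrum matter) into the bounded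
operators, with the sup-norm bound and strong σ-continuity. This data is equivalent
to the projection-valued spectral measure of a self-adjoint operator with the given
spectrum. -/
structure SelfAdjointCalculus (ℋ : Type) [NormedAddCommGroup ℋ]
    [InnerProductSpace ℂ ℋ] [CompleteSpace ℋ] where
  spectrum : Set ℝ
  spectrum_nonempty : spectrum.Nonempty
  spectrum_closed : IsClosed spectrum
  fc : (ℝ → ℂ) → (ℋ →L[ℂ] ℋ)
  fc_one : fc (fun _ => 1) = ContinuousLinearMap.id ℂ ℋ
  fc_add : ∀ f g, fc (f + g) = fc f + fc g
  fc_smul : ∀ (c : ℂ) (f), fc (c • f) = c • fc f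
  fc_mul : ∀ f g, fc (f * g) = (fc f).comp (fc g)
  fc_star : ∀ f, fc (fun t => starRingEnd ℂ (f t)) = ContinuousLinearMap.adjoint (fc f)
  fc_norm : ∀ (f) (C : ℝ), (∀ t ∈ spectrum, ‖f t‖ ≤ C) → ‖fc f‖ ≤ C
  fc_eqOn : ∀ f g, Set.EqOn f g spectrum → fc f = fc g
  fc_tendsto : ∀ (f : ℕ → ℝ → ℂ) (g : ℝ → ℂ) (C : ℝ),
    (∀ n t, ‖f n t‖ ≤ C) →
    (∀ t ∈ spectrum, Filter.Tendsto (fun n => f n t) Filter.atTop (nhds (g t))) →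
    ∀ x : ℋ, Filter.Tendsto (fun n => fc (f n) x) Filter.atTop (nhds (fc g x))
  fc_proj_infinite : ∀ l ∈ spectrum, ∀ ε > 0,
    fc (Set.indicator {t | dist t l < ε} (fun _ => 1)) ≠ 0

namespace SelfAdjointCalculus

variable {ℋ : Type} [NormedAddCommGroup ℋ] [InnerProductSpace ℂ ℋ] [CompleteSpace ℋ]

/-- The spectral projection `𝟙_I(H)`. -/
def proj (Φ : SelfAdjointCalculus ℋ) (I : Set ℝ) : ℋ →L[ℂ] ℋ :=
  Φ.fc (I.indicator (fun _ => 1))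

/-- `B` is `H`-relatively compact: `B ∘ 𝟙_I(H)` is compact for every bounded Borel set
`I ⊆ ℝ`. -/
def RelCompactWrt (B : ℋ →L[ℂ] ℋ) (Φ : SelfAdjointCalculus ℋ) : Prop :=
  ∀ I : Set ℝ, MeasurableSet I → Bornology.IsBounded I →
    IsCompactOperator (B.comp (Φ.proj I))

/-- The semigroup `e^{-tH}` given by the functional calculus. -/
def heat (Φ : SelfAdjointCalculus ℋ) (t : ℝ) : ℋ →L[ℂ] ℋ :=
  Φ.fc (fun x => Complex.exp (-(t * x)))

/-- The resolvent `(H - λ)⁻¹` given by the functional calculus. -/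
def resolvent (Φ : SelfAdjointCalculus ℋ) (l : ℂ) : ℋ →L[ℂ] ℋ :=
  Φ.fc (fun t => ((t : ℂ) - l)⁻¹)

/-- The resolvent set of the self-adjoint operator: complex numbers away from the
(real) spectrum. -/
def resolventSet (Φ : SelfAdjointCalculus ℋ) : Set ℂ :=
  {l : ℂ | ∀ t ∈ Φ.spectrum, (t : ℂ) ≠ l}

/-- Truncated quadratic form `(min(H,n) u | u)`, an approximation of `h[u]`. -/
def formApprox (Φ : SelfAdjointCalculus ℋ) (n : ℕ) (u : ℋ) : ℝ :=
  (inner ℂ (Φ.fc (fun t => ((min t (n : ℝ) : ℝ) : ℂ)) u) u : ℂ).re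

/-- `u` belongs to the form domain `Q(H)` of a semibounded operator: the truncated
quadratic forms stay bounded. -/
def InFormDomain (Φ : SelfAdjointCalculus ℋ) (u : ℋ) : Prop :=
  BddAbove (Set.range fun n => Φ.formApprox n u)

/-- The quadratic form `h[u] = (Hu|u)` (extended to the form domain). -/
def quadForm (Φ : SelfAdjointCalculus ℋ) (u : ℋ) : ℝ :=
  ⨆ n, Φ.formApprox n u

/-- The essential spectrum: points around which every spectral projection has
infinite-dimensional range. -/
def essSpectrum (Φ : SelfAdjointCalculus ℋ) : Set ℝ :=
  {l : ℝ | ∀ ε > 0, ¬ FiniteDimensional ℂ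
    (LinearMap.range ((Φ.proj (Set.Ioo (l - ε) (l + ε))) : ℋ →ₗ[ℂ] ℋ))}

end SelfAdjointCalculus

open ENNReal

/-- Multiplication by the indicator function of a measurable set `E`, as a bounded
operator on `L²(X, μ)`. -/
def indicatorCLM {X : Type} [MeasurableSpace X] (μ : Measure X) (E : Set X)
    (hE : MeasurableSet E) : Lp ℂ 2 μ →L[ℂ] Lp ℂ 2 μ :=
  LinearMap.mkContinuous
    { toFun := fun u => ((Lp.memLp u).indicator hE).toLp (E.indicator u)
      map_add' := fun u v => by
        apply Lp.ext
        have h1 : ((((Lp.memLp (u + v)).indicator hE).toLp (E.indicator ⇑(u + v)) : Lp ℂ 2 μ) : X → ℂ)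
            =ᵐ[μ] E.indicator ⇑(u + v) := MemLp.coeFn_toLp _
        have h2 : ((((Lp.memLp u).indicator hE).toLp (E.indicator ⇑u) : Lp ℂ 2 μ) : X → ℂ)
            =ᵐ[μ] E.indicator ⇑u := MemLp.coeFn_toLp _
        have h3 : ((((Lp.memLp v).indicator hE).toLp (E.indicator ⇑v) : Lp ℂ 2 μ) : X → ℂ)
            =ᵐ[μ] E.indicator ⇑v := MemLp.coeFn_toLp _
        filter_upwards [h1, h2, h3,
          Lp.coeFn_add (((Lp.memLp u).indicator hE).toLp (E.indicator ⇑u))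
            (((Lp.memLp v).indicator hE).toLp (E.indicator ⇑v)),
          Lp.coeFn_add u v] with x hx1 hx2 hx3 hx4 hx5
        rw [hx4, hx1, Pi.add_apply, hx2, hx3]
        simp only [Set.indicator]
        split_ifs with h
        · exact hx5
        · simp
      map_smul' := fun c u => by
        apply Lp.ext
        have h1 : ((((Lp.memLp (c • u)).indicator hE).toLp (E.indicator ⇑(c • u)) : Lp ℂ 2 μ) : X → ℂ)
            =ᵐ[μ] E.indicator ⇑(c • u) := MemLp.coeFn_toLp _
        have h2 : ((((Lp.memLp u).indicator hE).toLp (E.indicator ⇑u) : Lp ℂ 2 μ) : X → ℂ)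
            =ᵐ[μ] E.indicator ⇑u := MemLp.coeFn_toLp _
        filter_upwards [h1, h2,
          Lp.coeFn_smul c (((Lp.memLp u).indicator hE).toLp (E.indicator ⇑u)),
          Lp.coeFn_smul c u] with x hx1 hx2 hx3 hx4
        simp only [RingHom.id_apply]
        rw [hx3, hx1, Pi.smul_apply, hx2]
        simp only [Set.indicator]
        split_ifs with h
        · exact hx4
        · simp }
    1
    (fun u => by
      simp only [LinearMap.coe_mk, AddHom.coe_mk, one_mul]
      rw [Lp.norm_toLp, Lp.norm_def]
      exact ENNReal.toReal_mono (Lp.eLpNorm_ne_top u) (eLpNorm_indicator_le _))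

/-- A Hilbert–Schmidt operator: `∑ ‖T e_i‖² < ∞` for (every) Hilbert basis. -/
def IsHilbertSchmidt {ℋ : Type} [NormedAddCommGroup ℋ] [InnerProductSpace ℂ ℋ]
    [CompleteSpace ℋ] (T : ℋ →L[ℂ] ℋ) : Prop :=
  ∀ (ι : Type) (b : HilbertBasis ι ℂ ℋ), Summable (fun i => ‖T (b i)‖ ^ 2)


namespace SelfAdjointCalculus

variable {ℋ : Type} [NormedAddCommGroup ℋ] [InnerProductSpace ℂ ℋ] [CompleteSpace ℋ]

lemma fc_real_sa (Φ : SelfAdjointCalculus ℋ) (φ : ℝ → ℝ) :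
    ContinuousLinearMap.adjoint (Φ.fc (fun x => (φ x : ℂ))) = Φ.fc (fun x => (φ x : ℂ)) := by
  rw [← Φ.fc_star]
  congr 1
  funext x
  simp [Complex.conj_ofReal]

lemma sa_inner_self (A : ℋ →L[ℂ] ℋ) (hA : ContinuousLinearMap.adjoint A = A) (u : ℋ) :
    (inner ℂ (A (A u)) u : ℂ) = inner ℂ (A u) (A u) := by
  nth_rewrite 1 [← hA]
  exact ContinuousLinearMap.adjoint_inner_left A u (A u)

lemma fc_real_nonneg (Φ : SelfAdjointCalculus ℋ) (φ : ℝ → ℝ)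
    (hφ : ∀ x ∈ Φ.spectrum, 0 ≤ φ x) (u : ℋ) :
    0 ≤ (inner ℂ (Φ.fc (fun x => (φ x : ℂ)) u) u : ℂ).re := by
  set s : ℝ → ℂ := fun x => (Real.sqrt (max (φ x) 0) : ℂ) with hs
  have h1 : Φ.fc (fun x => (φ x : ℂ)) = Φ.fc (s * s) := by
    apply Φ.fc_eqOn
    intro x hx
    simp only [hs, Pi.mul_apply]
    rw [← Complex.ofReal_mul, max_eq_left (hφ x hx), Real.mul_self_sqrt (hφ x hx)]
  have hsa : ContinuousLinearMap.adjoint (Φ.fc s) = Φ.fc s := by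
    have := Φ.fc_real_sa (fun x => Real.sqrt (max (φ x) 0))
    exact this
  have h2 : (inner ℂ (Φ.fc (fun x => (φ x : ℂ)) u) u : ℂ) = inner ℂ (Φ.fc s u) (Φ.fc s u) := by
    rw [h1, Φ.fc_mul, ContinuousLinearMap.comp_apply]
    exact sa_inner_self _ hsa u
  rw [h2]
  simpa using inner_self_nonneg (𝕜 := ℂ) (x := Φ.fc s u)

lemma fc_real_mono (Φ : SelfAdjointCalculus ℋ) (φ ψ : ℝ → ℝ)
    (h : ∀ x ∈ Φ.spectrum, φ x ≤ ψ x) (u : ℋ) :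
    (inner ℂ (Φ.fc (fun x => (φ x : ℂ)) u) u : ℂ).re ≤
      (inner ℂ (Φ.fc (fun x => (ψ x : ℂ)) u) u : ℂ).re := by
  have hpos := Φ.fc_real_nonneg (fun x => ψ x - φ x)
    (fun x hx => sub_nonneg.2 (h x hx)) u
  have hsplit : Φ.fc (fun x => ((ψ x : ℂ))) =
      Φ.fc (fun x => ((ψ x - φ x : ℝ) : ℂ)) + Φ.fc (fun x => (φ x : ℂ)) := by
    rw [← Φ.fc_add]
    congr 1
    funext x
    simp only [Pi.add_apply]
    push_cast
    ring
  rw [hsplit]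
  simp only [ContinuousLinearMap.add_apply, inner_add_left, Complex.add_re]
  linarith

/-- Norm of `fc` of a real function applied to `u`, as a quadratic form. -/
lemma fc_real_norm_sq (Φ : SelfAdjointCalculus ℋ) (φ : ℝ → ℝ) (u : ℋ) :
    ‖Φ.fc (fun x => (φ x : ℂ)) u‖ ^ 2 =
      (inner ℂ (Φ.fc (fun x => ((φ x * φ x : ℝ) : ℂ)) u) u : ℂ).re := by
  have hmul : Φ.fc (fun x => ((φ x * φ x : ℝ) : ℂ)) =
      (Φ.fc (fun x => (φ x : ℂ))).comp (Φ.fc (fun x => (φ x : ℂ))) := by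
    rw [← Φ.fc_mul]
    congr 1
    funext x
    push_cast
    rfl
  rw [hmul, ContinuousLinearMap.comp_apply, sa_inner_self _ (Φ.fc_real_sa φ) u]
  have := inner_self_eq_norm_sq (𝕜 := ℂ) (Φ.fc (fun x => (φ x : ℂ)) u)
  simpa using this.symm

end SelfAdjointCalculus

/-- Let `H ≥ 0` on `L²(X, μ)` (calculus `Φ`) have an ultracontractive
semigroup: `‖e^{-tH} f‖₂ ≤ c(t) ‖f‖₁` for all `f ∈ L¹ ∩ L²` and `t > 0`. Then the
super Poincaré inequality holds: for every `r > 0` there is `β(r) < ∞` with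
`‖f‖₂² ≤ r h[f] + β(r) ‖f‖₁²` for every `f ∈ Q(H) ∩ L¹`. -/
theorem stmt16 {X : Type} [MeasurableSpace X] (μ : Measure X) [SigmaFinite μ]
    (Φ : SelfAdjointCalculus (Lp ℂ 2 μ)) (hpos : Φ.spectrum ⊆ Set.Ici 0)
    (c : ℝ → ℝ)
    (hultra : ∀ t > (0 : ℝ), ∀ u : Lp ℂ 2 μ, MemLp (u : X → ℂ) 1 μ →
      ‖Φ.heat t u‖ ≤ c t * ∫ x, ‖u x‖ ∂μ) :
    ∀ r > (0 : ℝ), ∃ β : ℝ, ∀ u : Lp ℂ 2 μ, Φ.InFormDomain u →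
      MemLp (u : X → ℂ) 1 μ →
      ‖u‖ ^ 2 ≤ r * Φ.quadForm u + β * (∫ x, ‖u x‖ ∂μ) ^ 2 := by
  intro r hr
  set t : ℝ := r / 4 with ht
  have htpos : 0 < t := by positivity
  refine ⟨2 * (c t) ^ 2, fun u hu hu1 => ?_⟩
  set M : ℝ := ∫ x, ‖u x‖ ∂μ with hM
  have hMnn : 0 ≤ M := integral_nonneg (fun x => norm_nonneg _)
  set n : ℕ := ⌈1 / (2 * t)⌉₊ with hn
  have hn1 : 1 ≤ 2 * t * n := by
    have h1 : (1 / (2 * t) : ℝ) ≤ n := Nat.le_ceil _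
    calc (1 : ℝ) = 2 * t * (1 / (2 * t)) := by field_simp
    _ ≤ 2 * t * n := by
        apply mul_le_mul_of_nonneg_left h1 (by positivity)
  -- the real function g with fc g = id - heat t
  set g : ℝ → ℝ := fun x => 1 - Real.exp (-(t * x)) with hg
  have hfg : Φ.fc (fun x => (g x : ℂ)) u = u - Φ.heat t u := by
    have : (fun x => (g x : ℂ)) =
        (fun _ : ℝ => (1 : ℂ)) + (-1 : ℂ) • (fun x : ℝ => Complex.exp (-(t * x))) := by
      funext x
      simp only [hg, Pi.add_apply, Pi.smul_apply, smul_eq_mul]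
      push_cast
      ring
    rw [this, Φ.fc_add, Φ.fc_smul, Φ.fc_one, SelfAdjointCalculus.heat]
    simp [sub_eq_add_neg]
  -- pointwise inequality on the spectrum
  have hkey : ∀ x ∈ Φ.spectrum, g x * g x ≤ 2 * t * min x (n : ℝ) := by
    intro x hx
    have hx0 : (0 : ℝ) ≤ x := hpos hx
    have hy : 0 ≤ t * x := by positivity
    have he1 : Real.exp (-(t * x)) ≤ 1 := Real.exp_le_one_iff.2 (by linarith)
    have he2 : 1 - t * x ≤ Real.exp (-(t * x)) := by
      have := Real.add_one_le_exp (-(t * x))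
      linarith
    have he3 : 0 < Real.exp (-(t * x)) := Real.exp_pos _
    have hg1 : 0 ≤ g x := by simp only [hg]; linarith
    have hg2 : g x ≤ 1 := by simp only [hg]; linarith
    have hg3 : g x ≤ t * x := by simp only [hg]; linarith
    rcases le_total x (n : ℝ) with hxn | hxn
    · rw [min_eq_left hxn]
      nlinarith
    · rw [min_eq_right hxn]
      have hnx : t * (n : ℝ) ≤ t * x := by
        apply mul_le_mul_of_nonneg_left hxn htpos.le
      nlinarith
  -- the form estimate
  have hA : ‖u - Φ.heat t u‖ ^ 2 ≤ 2 * t * Φ.quadForm u := by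
    rw [← hfg, Φ.fc_real_norm_sq]
    have step1 : (inner ℂ (Φ.fc (fun x => ((g x * g x : ℝ) : ℂ)) u) u : ℂ).re ≤
        (inner ℂ (Φ.fc (fun x => ((2 * t * min x (n : ℝ) : ℝ) : ℂ)) u) u : ℂ).re :=
      Φ.fc_real_mono _ _ hkey u
    have step2 : (inner ℂ (Φ.fc (fun x => ((2 * t * min x (n : ℝ) : ℝ) : ℂ)) u) u : ℂ).re
        = 2 * t * Φ.formApprox n u := by
      have hsm : Φ.fc (fun x => ((2 * t * min x (n : ℝ) : ℝ) : ℂ)) =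
          ((2 * t : ℝ) : ℂ) • Φ.fc (fun x => ((min x (n : ℝ) : ℝ) : ℂ)) := by
        rw [← Φ.fc_smul]
        congr 1
        funext x
        simp only [Pi.smul_apply, smul_eq_mul]
        push_cast
        ring
      rw [hsm, SelfAdjointCalculus.formApprox]
      simp only [ContinuousLinearMap.smul_apply, inner_smul_left, Complex.conj_ofReal]
      rw [Complex.re_ofReal_mul]
    have step3 : Φ.formApprox n u ≤ Φ.quadForm u := le_ciSup hu n
    calc (inner ℂ (Φ.fc (fun x => ((g x * g x : ℝ) : ℂ)) u) u : ℂ).re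
        ≤ 2 * t * Φ.formApprox n u := by rw [← step2]; exact step1
      _ ≤ 2 * t * Φ.quadForm u := by
          apply mul_le_mul_of_nonneg_left step3 (by positivity)
  -- the ultracontractivity estimate
  have hB : ‖Φ.heat t u‖ ≤ c t * M := hultra t htpos u hu1
  have hBnn : (0 : ℝ) ≤ ‖Φ.heat t u‖ := norm_nonneg _
  have hB2 : ‖Φ.heat t u‖ ^ 2 ≤ (c t) ^ 2 * M ^ 2 := by
    have := pow_le_pow_left₀ hBnn hB 2
    calc ‖Φ.heat t u‖ ^ 2 ≤ (c t * M) ^ 2 := this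
      _ = (c t) ^ 2 * M ^ 2 := by ring
  -- triangle inequality and conclusion
  have htri : ‖u‖ ≤ ‖u - Φ.heat t u‖ + ‖Φ.heat t u‖ := by
    calc ‖u‖ = ‖(u - Φ.heat t u) + Φ.heat t u‖ := by rw [sub_add_cancel]
      _ ≤ _ := norm_add_le _ _
  have hunn : (0 : ℝ) ≤ ‖u‖ := norm_nonneg _
  have hAnn : (0 : ℝ) ≤ ‖u - Φ.heat t u‖ := norm_nonneg _
  have h2t : 2 * (2 * t) = r := by rw [ht]; ring
  nlinarith [sq_nonneg (‖u - Φ.heat t u‖ - ‖Φ.heat t u‖), pow_le_pow_left₀ hunn htri 2]
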